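/- Let ⟨A⟩ be a CNS numerical semigroup with parameters a ≥ 2, k ≥ 2, b ≥ 2, and positive integer d with gcd(a,d) = 1, and let p be a positive divisor of a with p ≠ a. If a ≥ k − 1 − (d−1)/(b−1), then the genus of the quotient is g(⟨A⟩/p) = Σ_{r=1}^{a/p − 1} (Σ_{i=1}^k x_i)_{rp} + (((b−1)*a + d − 1)/2) * (a/p − 1), where (Σ_{i=1}^k x_i)_{rp} denotes the sum of the coordinates of the greedy presentation X(r*p) of r*p with respect to B = (1, b+1, b²+b+1, ..., (b^k−1)/(b−1)). -/

import Mathlib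

/-- `repunit b i = 1 + b + ⋯ + b^(i-1) = (b^i − 1)/(b − 1)`. -/
def repunit (b i : ℕ) : ℕ := ∑ j ∈ Finset.range i, b ^ j

namespace Stmt14A

lemma repunit_succ (b i : ℕ) : repunit b (i+1) = b * repunit b i + 1 := by
  simp [repunit, Finset.sum_range_succ', pow_succ', Finset.mul_sum]

lemma repunit_one (b : ℕ) : repunit b 1 = 1 := by simp [repunit]

lemma repunit_zero (b : ℕ) : repunit b 0 = 0 := by simp [repunit]

lemma repunit_pos (b i : ℕ) (hi : 1 ≤ i) : 1 ≤ repunit b i := by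
  cases i with
  | zero => omega
  | succ j => rw [repunit_succ]; omega

lemma repunit_mul (b i : ℕ) (hb : 1 ≤ b) : (b - 1) * repunit b i + 1 = b ^ i := by
  induction i with
  | zero => simp [repunit]
  | succ n ih =>
      rw [repunit_succ, pow_succ]
      obtain ⟨c, rfl⟩ := Nat.exists_eq_add_of_le hb
      have hsub : 1 + c - 1 = c := by omega
      rw [hsub] at ih ⊢
      rw [← ih]; ring

lemma sum_move (s : Finset ℕ) (w y A S : ℕ → ℕ) (hS : ∀ j ∈ s, S j ≤ y j) :
    ∑ j ∈ s, w j * (y j + A j - S j) + ∑ j ∈ s, w j * S j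
      = ∑ j ∈ s, w j * y j + ∑ j ∈ s, w j * A j := by
  rw [← Finset.sum_add_distrib, ← Finset.sum_add_distrib]
  refine Finset.sum_congr rfl fun j hj => ?_
  have h := hS j hj
  have h2 : y j + A j - S j + S j = y j + A j := by omega
  calc w j * (y j + A j - S j) + w j * S j
      = w j * (y j + A j - S j + S j) := by ring
    _ = w j * (y j + A j) := by rw [h2]
    _ = w j * y j + w j * A j := by ring

lemma sum_single (s : Finset ℕ) (w : ℕ → ℕ) (c v : ℕ) (hc : c ∈ s) :
    ∑ j ∈ s, w j * (if j = c then v else 0) = w c * v := by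
  rw [Finset.sum_eq_single c]
  · simp
  · intro j _ hj; simp [hj]
  · intro h; exact absurd hc h

lemma sum_two (s : Finset ℕ) (w : ℕ → ℕ) (c₁ v₁ c₂ v₂ : ℕ) (h₁ : c₁ ∈ s) (h₂ : c₂ ∈ s) :
    ∑ j ∈ s, w j * ((if j = c₁ then v₁ else 0) + (if j = c₂ then v₂ else 0))
      = w c₁ * v₁ + w c₂ * v₂ := by
  simp only [mul_add]
  rw [Finset.sum_add_distrib, sum_single s w c₁ v₁ h₁, sum_single s w c₂ v₂ h₂]

lemma move_master (k b : ℕ) (y : ℕ → ℕ) (s₁ v₁ s₂ v₂ a₁ u₁ a₂ u₂ : ℕ)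
    (hs₁ : s₁ ∈ Finset.Icc 1 k) (hs₂ : s₂ ∈ Finset.Icc 1 k)
    (ha₁ : a₁ ∈ Finset.Icc 1 k) (ha₂ : a₂ ∈ Finset.Icc 1 k)
    (hSy : ∀ j ∈ Finset.Icc 1 k,
      (if j = s₁ then v₁ else 0) + (if j = s₂ then v₂ else 0) ≤ y j)
    (hBkey : repunit b a₁ * u₁ + repunit b a₂ * u₂
        = repunit b s₁ * v₁ + repunit b s₂ * v₂)
    (hcnt : u₁ + u₂ ≤ v₁ + v₂)
    (hmu : a₁ * u₁ + a₂ * u₂ < s₁ * v₁ + s₂ * v₂) :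
    ∃ y' : ℕ → ℕ,
      (∑ i ∈ Finset.Icc 1 k, repunit b i * y' i
        = ∑ i ∈ Finset.Icc 1 k, repunit b i * y i) ∧
      (∑ i ∈ Finset.Icc 1 k, y' i ≤ ∑ i ∈ Finset.Icc 1 k, y i) ∧
      (∑ i ∈ Finset.Icc 1 k, i * y' i < ∑ i ∈ Finset.Icc 1 k, i * y i) := by
  refine ⟨fun j => y j + ((if j = a₁ then u₁ else 0) + (if j = a₂ then u₂ else 0))
      - ((if j = s₁ then v₁ else 0) + (if j = s₂ then v₂ else 0)), ?_, ?_, ?_⟩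
  · have eB := sum_move (Finset.Icc 1 k) (fun i => repunit b i) y
      (fun j => (if j = a₁ then u₁ else 0) + (if j = a₂ then u₂ else 0))
      (fun j => (if j = s₁ then v₁ else 0) + (if j = s₂ then v₂ else 0)) hSy
    rw [sum_two _ _ s₁ v₁ s₂ v₂ hs₁ hs₂, sum_two _ _ a₁ u₁ a₂ u₂ ha₁ ha₂] at eB
    simp only [] at eB ⊢
    linarith [hBkey]
  · have eσ := sum_move (Finset.Icc 1 k) (fun _ => 1) y
      (fun j => (if j = a₁ then u₁ else 0) + (if j = a₂ then u₂ else 0))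
      (fun j => (if j = s₁ then v₁ else 0) + (if j = s₂ then v₂ else 0)) hSy
    rw [sum_two _ _ s₁ v₁ s₂ v₂ hs₁ hs₂, sum_two _ _ a₁ u₁ a₂ u₂ ha₁ ha₂] at eσ
    simp only [one_mul] at eσ ⊢
    omega
  · have eμ := sum_move (Finset.Icc 1 k) (fun j => j) y
      (fun j => (if j = a₁ then u₁ else 0) + (if j = a₂ then u₂ else 0))
      (fun j => (if j = s₁ then v₁ else 0) + (if j = s₂ then v₂ else 0)) hSy
    rw [sum_two _ _ s₁ v₁ s₂ v₂ hs₁ hs₂, sum_two _ _ a₁ u₁ a₂ u₂ ha₁ ha₂] at eμ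
    simp only [] at eμ ⊢
    linarith [hmu]

lemma step (k b : ℕ) (hb : 2 ≤ b) (y : ℕ → ℕ)
    (H : (∃ i, 1 ≤ i ∧ i + 1 ≤ k ∧ b + 1 ≤ y i) ∨
         (∃ i, 2 ≤ i ∧ i + 1 ≤ k ∧ y i = b ∧ ∃ m, 1 ≤ m ∧ m < i ∧ 1 ≤ y m)) :
    ∃ y' : ℕ → ℕ,
      (∑ i ∈ Finset.Icc 1 k, repunit b i * y' i
        = ∑ i ∈ Finset.Icc 1 k, repunit b i * y i) ∧
      (∑ i ∈ Finset.Icc 1 k, y' i ≤ ∑ i ∈ Finset.Icc 1 k, y i) ∧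
      (∑ i ∈ Finset.Icc 1 k, i * y' i < ∑ i ∈ Finset.Icc 1 k, i * y i) := by
  rcases H with ⟨i, hi1, hik, hyi⟩ | ⟨i, hi2, hik, hyi, m, hm1, hmi, hym⟩
  · rcases Nat.lt_or_ge i 2 with hi2 | hi2
    · have h1 : i = 1 := by omega
      subst h1
      refine move_master k b y 1 (b+1) 1 0 2 1 2 0 ?_ ?_ ?_ ?_ ?_ ?_ ?_ ?_
      · simp [Finset.mem_Icc]; omega
      · simp [Finset.mem_Icc]; omega
      · simp [Finset.mem_Icc]; omega
      · simp [Finset.mem_Icc]; omega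
      · intro j hj
        by_cases h : j = 1
        · subst h; simpa using hyi
        · simp [h]
      · rw [show (2:ℕ) = 1 + 1 from rfl, repunit_succ, repunit_one]; ring
      · omega
      · omega
    · obtain ⟨m', rfl⟩ : ∃ m', i = m' + 1 := ⟨i - 1, by omega⟩
      have hm'1 : 1 ≤ m' := by omega
      refine move_master k b y (m'+1) (b+1) (m'+1) 0 (m'+2) 1 m' b ?_ ?_ ?_ ?_ ?_ ?_ ?_ ?_
      · simp [Finset.mem_Icc]; omega
      · simp [Finset.mem_Icc]; omega
      · simp [Finset.mem_Icc]; omega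
      · simp [Finset.mem_Icc]; omega
      · intro j hj
        by_cases h : j = m' + 1
        · subst h; simpa using hyi
        · simp [h]
      · rw [show m'+2 = (m'+1)+1 from rfl, repunit_succ, repunit_succ]; ring
      · omega
      · nlinarith
  · rcases Nat.lt_or_ge m 2 with hm2 | hm2
    · have h1 : m = 1 := by omega
      subst h1
      refine move_master k b y i b 1 1 (i+1) 1 (i+1) 0 ?_ ?_ ?_ ?_ ?_ ?_ ?_ ?_
      · simp [Finset.mem_Icc]; omega
      · simp [Finset.mem_Icc]; omega
      · simp [Finset.mem_Icc]; omega
      · simp [Finset.mem_Icc]; omega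
      · intro j hj
        by_cases h : j = i
        · subst h
          have hne : j ≠ 1 := by omega
          simp [hne, hyi]
        · by_cases h2 : j = 1
          · subst h2; simp [h]; omega
          · simp [h, h2]
      · cases i with
        | zero => omega
        | succ i' => simp only [repunit_succ, repunit_one, repunit_zero]; ring
      · omega
      · nlinarith
    · obtain ⟨m', rfl⟩ : ∃ m', m = m' + 1 := ⟨m - 1, by omega⟩
      have hm'1 : 1 ≤ m' := by omega
      refine move_master k b y i b (m'+1) 1 (i+1) 1 m' b ?_ ?_ ?_ ?_ ?_ ?_ ?_ ?_
      · simp [Finset.mem_Icc]; omega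
      · simp [Finset.mem_Icc]; omega
      · simp [Finset.mem_Icc]; omega
      · simp [Finset.mem_Icc]; omega
      · intro j hj
        by_cases h : j = i
        · subst h
          have hne : j ≠ m' + 1 := by omega
          simp [hne, hyi]
        · by_cases h2 : j = m' + 1
          · subst h2; simp [h]; omega
          · simp [h, h2]
      · cases i with
        | zero => omega
        | succ i' => simp only [repunit_succ, repunit_one, repunit_zero]; ring
      · omega
      · nlinarith

lemma prefix_lt (k b : ℕ) (x : ℕ → ℕ)
    (hxle : ∀ i, 1 ≤ i → i + 1 ≤ k → x i ≤ b)
    (hxz : ∀ i, 2 ≤ i → i + 1 ≤ k → x i = b → ∀ j, 1 ≤ j → j < i → x j = 0) :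
    ∀ j, 1 ≤ j → j ≤ k → ∑ i ∈ Finset.Ico 1 j, repunit b i * x i < repunit b j := by
  intro j hj1
  induction j, hj1 using Nat.le_induction with
  | base => intro _; simp [repunit_one]
  | succ j hj ih =>
      intro hjk
      rw [Finset.sum_Ico_succ_top hj, repunit_succ]
      have hxj : x j ≤ b := hxle j hj hjk
      rcases Nat.lt_or_ge (x j) b with hlt | hge
      · have hP := ih (by omega)
        calc ∑ i ∈ Finset.Ico 1 j, repunit b i * x i + repunit b j * x j
            < repunit b j + repunit b j * x j := Nat.add_lt_add_right hP _
          _ = repunit b j * (x j + 1) := by ring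
          _ ≤ repunit b j * b := Nat.mul_le_mul_left _ (by omega)
          _ = b * repunit b j := mul_comm _ _
          _ < b * repunit b j + 1 := Nat.lt_succ_self _
      · have hxb : x j = b := le_antisymm hxj hge
        rcases Nat.lt_or_ge j 2 with hj2 | hj2
        · have hj1' : j = 1 := by omega
          subst hj1'
          simp [repunit_one, hxb]
        · have hz := hxz j hj2 hjk hxb
          have hzero : ∑ i ∈ Finset.Ico 1 j, repunit b i * x i = 0 :=
            Finset.sum_eq_zero fun i hi => by
              rw [Finset.mem_Ico] at hi
              rw [hz i hi.1 hi.2]; ring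
          rw [hzero, hxb, Nat.zero_add, Nat.mul_comm]
          exact Nat.lt_succ_self _

lemma greedy_unique (k b : ℕ) (x z : ℕ → ℕ)
    (hx : ∀ j, 1 ≤ j → j ≤ k → ∑ i ∈ Finset.Ico 1 j, repunit b i * x i < repunit b j)
    (hz : ∀ j, 1 ≤ j → j ≤ k → ∑ i ∈ Finset.Ico 1 j, repunit b i * z i < repunit b j)
    (hsum : ∑ i ∈ Finset.Icc 1 k, repunit b i * x i
        = ∑ i ∈ Finset.Icc 1 k, repunit b i * z i) :
    ∀ i, 1 ≤ i → i ≤ k → x i = z i := by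
  suffices H : ∀ t, (∑ i ∈ Finset.Icc 1 (k - t), repunit b i * x i
        = ∑ i ∈ Finset.Icc 1 (k - t), repunit b i * z i)
      ∧ (∀ i, k - t < i → i ≤ k → x i = z i) by
    intro i hi1 hik
    exact (H k).2 i (by omega) hik
  intro t
  induction t with
  | zero =>
      constructor
      · simpa using hsum
      · intro i h1 h2; omega
  | succ t ih =>
      obtain ⟨hsums, heq⟩ := ih
      rcases Nat.lt_or_ge k (t+1) with hkt | hkt
      · have h1 : k - t = 0 := by omega
        have h2 : k - (t+1) = 0 := by omega
        rw [h2]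
        rw [h1] at hsums
        exact ⟨hsums, fun i hi hik => heq i (by omega) hik⟩
      · set j := k - t with hjdef
        have hj1 : 1 ≤ j := by omega
        have hjk : j ≤ k := by omega
        have hsplit : ∀ f : ℕ → ℕ, ∑ i ∈ Finset.Icc 1 j, f i
            = ∑ i ∈ Finset.Ico 1 j, f i + f j := by
          intro f
          have hic : Finset.Icc 1 j = Finset.Ico 1 (j+1) := by
            rw [Finset.Ico_add_one_right_eq_Icc]
          rw [hic, Finset.sum_Ico_succ_top hj1]
        rw [hsplit, hsplit] at hsums
        have hxj := hx j hj1 hjk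
        have hzj := hz j hj1 hjk
        have haux : ∀ u v : ℕ → ℕ,
            (∑ i ∈ Finset.Ico 1 j, repunit b i * u i + repunit b j * u j
              = ∑ i ∈ Finset.Ico 1 j, repunit b i * v i + repunit b j * v j) →
            (∑ i ∈ Finset.Ico 1 j, repunit b i * u i < repunit b j) →
            (∑ i ∈ Finset.Ico 1 j, repunit b i * v i < repunit b j) →
            ¬ (u j < v j) := by
          intro u v he hu hv hlt
          have hkey : repunit b j * u j + repunit b j ≤ repunit b j * v j := by
            calc repunit b j * u j + repunit b j = repunit b j * (u j + 1) := by ring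
              _ ≤ repunit b j * v j := Nat.mul_le_mul_left _ (by omega)
          omega
        have hxzj : x j = z j := by
          rcases Nat.lt_trichotomy (x j) (z j) with h | h | h
          · exact absurd h (haux x z hsums hxj hzj)
          · exact h
          · exact absurd h (haux z x hsums.symm hzj hxj)
        have hrest : ∑ i ∈ Finset.Ico 1 j, repunit b i * x i
            = ∑ i ∈ Finset.Ico 1 j, repunit b i * z i := by
          rw [hxzj] at hsums; omega
        constructor
        · have hkk : k - (t+1) = j - 1 := by omega
          have hicc : Finset.Icc 1 (j-1) = Finset.Ico 1 j := by
            rw [← Finset.Ico_add_one_right_eq_Icc]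
            congr 1
            omega
          rw [hkk, hicc]
          exact hrest
        · intro i hi hik
          rcases Nat.eq_or_lt_of_le (show j ≤ i by omega) with h | h
          · rw [← h]; exact hxzj
          · exact heq i h hik

lemma terminal (k b : ℕ) (x y : ℕ → ℕ)
    (hxle : ∀ i, 1 ≤ i → i + 1 ≤ k → x i ≤ b)
    (hxz : ∀ i, 2 ≤ i → i + 1 ≤ k → x i = b → ∀ j, 1 ≤ j → j < i → x j = 0)
    (hyle : ∀ i, 1 ≤ i → i + 1 ≤ k → y i ≤ b)
    (hyz : ∀ i, 2 ≤ i → i + 1 ≤ k → y i = b → ∀ j, 1 ≤ j → j < i → y j = 0)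
    (hsum : ∑ i ∈ Finset.Icc 1 k, repunit b i * x i
        = ∑ i ∈ Finset.Icc 1 k, repunit b i * y i) :
    ∑ i ∈ Finset.Icc 1 k, x i = ∑ i ∈ Finset.Icc 1 k, y i := by
  have hu := greedy_unique k b x y (prefix_lt k b x hxle hxz) (prefix_lt k b y hyle hyz) hsum
  refine Finset.sum_congr rfl fun i hi => ?_
  rw [Finset.mem_Icc] at hi
  exact hu i hi.1 hi.2

lemma opt (k b : ℕ) (hb : 2 ≤ b) (M : ℕ) (x : ℕ → ℕ)
    (hxsum : ∑ i ∈ Finset.Icc 1 k, repunit b i * x i = M)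
    (hxle : ∀ i, 1 ≤ i → i + 1 ≤ k → x i ≤ b)
    (hxz : ∀ i, 2 ≤ i → i + 1 ≤ k → x i = b → ∀ j, 1 ≤ j → j < i → x j = 0)
    (y : ℕ → ℕ)
    (hysum : ∑ i ∈ Finset.Icc 1 k, repunit b i * y i = M) :
    ∑ i ∈ Finset.Icc 1 k, x i ≤ ∑ i ∈ Finset.Icc 1 k, y i := by
  suffices H : ∀ N (y : ℕ → ℕ), (∑ i ∈ Finset.Icc 1 k, i * y i ≤ N) →
      (∑ i ∈ Finset.Icc 1 k, repunit b i * y i = M) →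
      ∑ i ∈ Finset.Icc 1 k, x i ≤ ∑ i ∈ Finset.Icc 1 k, y i by
    exact H _ y le_rfl hysum
  intro N
  induction N with
  | zero =>
      intro y hmu hy
      have hterm : ∀ i, 1 ≤ i → i ≤ k → y i = 0 := by
        intro i h1 h2
        by_contra h
        have hmem : i ∈ Finset.Icc 1 k := Finset.mem_Icc.mpr ⟨h1, h2⟩
        have hone : 1 ≤ i * y i := by
          have : 1 ≤ y i := by omega
          nlinarith
        have hle := Finset.single_le_sum (f := fun i => i * y i)
          (fun j _ => Nat.zero_le _) hmem
        omega
      rw [terminal k b x y hxle hxz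
        (fun i h1 h2 => by rw [hterm i h1 (by omega)]; omega)
        (fun i h1 h2 h3 j j1 j2 => hterm j j1 (by omega))
        (hxsum.trans hy.symm)]
  | succ n ih =>
      intro y hmu hy
      by_cases hC : (∃ i, 1 ≤ i ∧ i + 1 ≤ k ∧ b + 1 ≤ y i) ∨
         (∃ i, 2 ≤ i ∧ i + 1 ≤ k ∧ y i = b ∧ ∃ m, 1 ≤ m ∧ m < i ∧ 1 ≤ y m)
      · obtain ⟨y', hy'B, hy'σ, hy'μ⟩ := step k b hb y hC
        exact le_trans (ih y' (by omega) (hy'B.trans hy)) hy'σ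
      · push_neg at hC
        obtain ⟨hC1, hC2⟩ := hC
        rw [terminal k b x y hxle hxz
          (fun i h1 h2 => by have := hC1 i; omega)
          (fun i h1 h2 h3 j j1 j2 => by have := hC2 i h1 h2 h3 j j1 j2; omega)
          (hxsum.trans hy.symm)]

lemma Sg_eq (a k b d : ℕ) (hb : 1 ≤ b) (y : ℕ → ℕ) :
    ∑ i ∈ Finset.Icc 1 k, y i * (b ^ i * a + repunit b i * d)
      = (∑ i ∈ Finset.Icc 1 k, repunit b i * y i) * ((b-1)*a + d)
        + (∑ i ∈ Finset.Icc 1 k, y i) * a := by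
  rw [Finset.sum_mul, Finset.sum_mul, ← Finset.sum_add_distrib]
  refine Finset.sum_congr rfl fun i _ => ?_
  rw [← repunit_mul b i hb]
  obtain ⟨c, rfl⟩ := Nat.exists_eq_add_of_le hb
  rw [show 1 + c - 1 = c from by omega]
  ring

end Stmt14A

open Stmt14A in
/-- genus of the quotient of a CNS numerical semigroup
`⟨a, ba + d, b²a + (b²−1)/(b−1)·d, …, bᵏa + (bᵏ−1)/(b−1)·d⟩` by a positive divisor
`p ≠ a` of `a`. If `a ≥ k − 1 − (d−1)/(b−1)`, then
`g(⟨A⟩/p) = Σ_{r=1}^{a/p−1} (Σ_i x_i)_{rp} + (((b−1)a + d − 1)/2)·(a/p − 1)`,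
where `(Σ_i x_i)_{rp}` is the coordinate sum of the greedy presentation of `r·p`.
(The identity is stated after multiplication by 2.) -/
theorem stmt_14 (a k b d p : ℕ)
    (ha : 2 ≤ a) (hk : 2 ≤ k) (hb : 2 ≤ b) (hd : 1 ≤ d)
    (hgcd : Nat.gcd a d = 1)
    (hp : 0 < p) (hpa : p ∣ a) (hpne : p ≠ a)
    (hcond : (k : ℚ) - 1 - ((d : ℚ) - 1) / ((b : ℚ) - 1) ≤ (a : ℚ))
    -- `x r` is the greedy presentation of `r * p` with respect to `B`,
    -- for each `1 ≤ r ≤ a/p - 1`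
    (x : ℕ → ℕ → ℕ)
    (hxsum : ∀ r, 1 ≤ r → r ≤ a / p - 1 →
      ∑ i ∈ Finset.Icc 1 k, repunit b i * x r i = r * p)
    (hxk : ∀ r, 1 ≤ r → r ≤ a / p - 1 → x r k = r * p / repunit b k)
    (hxle : ∀ r, 1 ≤ r → r ≤ a / p - 1 → ∀ i, 1 ≤ i → i ≤ k - 1 → x r i ≤ b)
    (hxzero : ∀ r, 1 ≤ r → r ≤ a / p - 1 → ∀ i, 2 ≤ i → i ≤ k - 1 → x r i = b →
      ∀ j, 1 ≤ j → j < i → x r j = 0) :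
    2 * (({n : ℕ | 0 < n ∧ ¬ ∃ y : ℕ → ℕ, p * n = y 0 * a +
          ∑ i ∈ Finset.Icc 1 k, y i * (b ^ i * a + repunit b i * d)}).ncard : ℤ)
      = 2 * (∑ r ∈ Finset.Icc 1 (a / p - 1),
          ((∑ i ∈ Finset.Icc 1 k, x r i : ℕ) : ℤ)) +
        (((b : ℤ) - 1) * a + d - 1) * (((a / p : ℕ) : ℤ) - 1) := by
  classical
  obtain ⟨q, hq⟩ := hpa
  have hqap : a / p = q := by rw [hq, Nat.mul_div_cancel_left _ hp]
  have hq2 : 2 ≤ q := by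
    have h0 : q ≠ 0 := by rintro rfl; omega
    have h1 : q ≠ 1 := by rintro rfl; omega
    omega
  -- the "multiplier" C : every generator g i satisfies g i = repunit b i * C + a
  set C : ℕ := (b - 1) * a + d with hCdef
  have hC1 : a + 1 ≤ C := by
    have h1 : 1 * a ≤ (b - 1) * a := Nat.mul_le_mul_right a (by omega)
    rw [hCdef]; linarith
  have hCd : C ≡ d [MOD a] := by
    show C % a = d % a
    rw [hCdef, add_comm, Nat.add_mul_mod_self_right]
  have hqdvd : q ∣ a := ⟨p, by rw [hq]; ring⟩
  have hdq : Nat.Coprime d q := Nat.Coprime.coprime_dvd_right hqdvd (Nat.Coprime.symm hgcd)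
  obtain ⟨e, -, he⟩ := Nat.exists_mul_mod_eq_one_of_coprime hdq (by omega)
  have hde : d * e ≡ 1 [MOD q] := by
    show d * e % q = 1 % q
    rw [he, Nat.mod_eq_of_lt (by omega)]
  have hcanc1 : ∀ u, u < q → (u * e % q) * d % q = u := by
    intro u hu
    have h1 : (u * e % q) * d ≡ u * e * d [MOD q] := Nat.ModEq.mul_right d (Nat.mod_modEq _ q)
    have h3 : u * (d * e) ≡ u * 1 [MOD q] := Nat.ModEq.mul_left u hde
    have h4 : (u * e % q) * d ≡ u [MOD q] := by
      have h5 := h1.trans (show u * e * d ≡ u * 1 [MOD q] from by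
        rw [show u * e * d = u * (d * e) from by ring]; exact h3)
      simpa using h5
    have h6 : (u * e % q) * d % q = u % q := h4
    rw [Nat.mod_eq_of_lt hu] at h6
    exact h6
  have hcanc2 : ∀ r, r < q → (r * d % q) * e % q = r := by
    intro r hr
    have h1 : (r * d % q) * e ≡ r * d * e [MOD q] := Nat.ModEq.mul_right e (Nat.mod_modEq _ q)
    have h3 : r * (d * e) ≡ r * 1 [MOD q] := Nat.ModEq.mul_left r hde
    have h4 : (r * d % q) * e ≡ r [MOD q] := by
      have h5 := h1.trans (show r * d * e ≡ r * 1 [MOD q] from by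
        rw [show r * d * e = r * (d * e) from by ring]; exact h3)
      simpa using h5
    have h6 : (r * d % q) * e % q = r % q := h4
    rw [Nat.mod_eq_of_lt hr] at h6
    exact h6
  set n0 : ℕ → ℕ := fun r => r * d % q with hn0def
  have hn0lt : ∀ r, n0 r < q := fun r => Nat.mod_lt _ (by omega)
  have hn0pos : ∀ r, 1 ≤ r → r ≤ q - 1 → 1 ≤ n0 r := by
    intro r h1 h2
    by_contra h
    have h0 : r * d % q = 0 := by simp only [hn0def] at h; omega
    have hdvd : q ∣ r * d := Nat.dvd_of_mod_eq_zero h0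
    have hr : q ∣ r := Nat.Coprime.dvd_of_dvd_mul_right (Nat.Coprime.symm hdq) hdvd
    have := Nat.le_of_dvd (by omega) hr
    omega
  set w : ℕ → ℕ := fun r => r * p * C + a * (∑ i ∈ Finset.Icc 1 k, x r i) with hwdef
  set cc : ℕ → ℕ := fun r => (w r - n0 r * p) / a with hccdef
  -- greedy hypotheses rephrased
  have hx1 : ∀ r, 1 ≤ r → r ≤ q - 1 →
      ∑ i ∈ Finset.Icc 1 k, repunit b i * x r i = r * p :=
    fun r h1 h2 => hxsum r h1 (by rw [hqap]; omega)
  have hx2 : ∀ r, 1 ≤ r → r ≤ q - 1 → ∀ i, 1 ≤ i → i + 1 ≤ k → x r i ≤ b :=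
    fun r h1 h2 i hi1 hi2 => hxle r h1 (by rw [hqap]; omega) i hi1 (by omega)
  have hx3 : ∀ r, 1 ≤ r → r ≤ q - 1 → ∀ i, 2 ≤ i → i + 1 ≤ k → x r i = b →
      ∀ j, 1 ≤ j → j < i → x r j = 0 :=
    fun r h1 h2 i hi1 hi2 hib => hxzero r h1 (by rw [hqap]; omega) i hi1 (by omega) hib
  have hσr : ∀ r, 1 ≤ r → r ≤ q - 1 → (∑ i ∈ Finset.Icc 1 k, x r i) ≤ r * p := by
    intro r h1 h2
    rw [← hx1 r h1 h2]
    refine Finset.sum_le_sum fun i hi => ?_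
    rw [Finset.mem_Icc] at hi
    exact Nat.le_mul_of_pos_left _ (repunit_pos b i hi.1)
  have hrplt : ∀ r, 1 ≤ r → r ≤ q - 1 → r * p < a := by
    intro r h1 h2
    have h3 : (r+1) * p ≤ q * p := Nat.mul_le_mul_right p (by omega)
    have h4 : q * p = a := by rw [hq]; ring
    have h5 : (r+1)*p = r*p + p := by ring
    linarith
  have hn0plt : ∀ r, n0 r * p < a := by
    intro r
    have h3 : (n0 r + 1) * p ≤ q * p := Nat.mul_le_mul_right p (hn0lt r)
    have h4 : q * p = a := by rw [hq]; ring
    have h5 : (n0 r + 1)*p = n0 r * p + p := by ring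
    linarith
  have hwbig : ∀ r, 1 ≤ r → r ≤ q - 1 → a < w r := by
    intro r h1 h2
    have h3 : C ≤ r * p * C := Nat.le_mul_of_pos_left C (Nat.mul_pos (by omega) hp)
    have h4 : r*p*C ≤ r*p*C + a*(∑ i ∈ Finset.Icc 1 k, x r i) := Nat.le_add_right _ _
    simp only [hwdef]
    linarith
  have hpn0d : ∀ r : ℕ, p * n0 r ≡ p * (r * d) [MOD a] := by
    intro r
    have h := Nat.ModEq.mul_left' (c := p) (Nat.mod_modEq (r*d) q)
    rw [← hq] at h
    simpa [hn0def] using h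
  have hwn0 : ∀ r, 1 ≤ r → r ≤ q - 1 → n0 r * p ≡ w r [MOD a] := by
    intro r h1 h2
    have f1 : w r ≡ r * p * C [MOD a] := by
      show w r % a = (r*p*C) % a
      simp only [hwdef]
      rw [mul_comm a _, Nat.add_mul_mod_self_right]
    have f2 : r*p*C ≡ r*p*d [MOD a] := Nat.ModEq.mul_left _ hCd
    have e5 : w r ≡ r*p*d [MOD a] := f1.trans f2
    have e8 : p * (r*d) ≡ w r [MOD a] := by
      rw [show p * (r*d) = r*p*d from by ring]
      exact e5.symm
    rw [mul_comm (n0 r) p]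
    exact (hpn0d r).trans e8
  have hle_n0w : ∀ r, 1 ≤ r → r ≤ q - 1 → n0 r * p ≤ w r :=
    fun r h1 h2 => le_trans (le_of_lt (hn0plt r)) (le_of_lt (hwbig r h1 h2))
  have hca : ∀ r, 1 ≤ r → r ≤ q - 1 → cc r * a + n0 r * p = w r := by
    intro r h1 h2
    have hdvd := (Nat.modEq_iff_dvd' (hle_n0w r h1 h2)).mp (hwn0 r h1 h2)
    simp only [hccdef]
    rw [Nat.div_mul_cancel hdvd, Nat.sub_add_cancel (hle_n0w r h1 h2)]
  have hSg : ∀ y : ℕ → ℕ, ∑ i ∈ Finset.Icc 1 k, y i * (b ^ i * a + repunit b i * d)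
      = (∑ i ∈ Finset.Icc 1 k, repunit b i * y i) * C
        + (∑ i ∈ Finset.Icc 1 k, y i) * a := by
    intro y
    rw [hCdef]
    exact Sg_eq a k b d (by omega) y
  -- the minimality of the greedy presentation in its congruence class
  have hlower : ∀ r, 1 ≤ r → r ≤ q - 1 → ∀ y : ℕ → ℕ,
      d * (∑ i ∈ Finset.Icc 1 k, repunit b i * y i) ≡ d * (r * p) [MOD a] →
      w r ≤ (∑ i ∈ Finset.Icc 1 k, repunit b i * y i) * C
            + (∑ i ∈ Finset.Icc 1 k, y i) * a := by
    intro r h1 h2 y hmod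
    have hMMeq : (∑ i ∈ Finset.Icc 1 k, repunit b i * y i) ≡ r * p [MOD a] :=
      Nat.ModEq.cancel_left_of_coprime hgcd hmod
    set MM := ∑ i ∈ Finset.Icc 1 k, repunit b i * y i with hMMdef
    have h2' : MM % a = r * p := by
      have hh := hMMeq
      unfold Nat.ModEq at hh
      rw [Nat.mod_eq_of_lt (hrplt r h1 h2)] at hh
      exact hh
    have h3 : a * (MM / a) + r * p = MM := by
      rw [← h2']; exact Nat.div_add_mod MM a
    rcases Nat.eq_zero_or_pos (MM / a) with ht | ht
    · have hMMrp : MM = r * p := by rw [ht] at h3; simpa using h3.symm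
      have hopt := opt k b hb (r*p) (x r) (hx1 r h1 h2) (hx2 r h1 h2) (hx3 r h1 h2) y
        (by rw [← hMMdef, hMMrp])
      simp only [hwdef]
      rw [hMMrp]
      have h5 : a * (∑ i ∈ Finset.Icc 1 k, x r i) ≤ a * (∑ i ∈ Finset.Icc 1 k, y i) :=
        Nat.mul_le_mul_left a hopt
      have h6 : a * (∑ i ∈ Finset.Icc 1 k, y i) = (∑ i ∈ Finset.Icc 1 k, y i) * a :=
        mul_comm _ _
      linarith
    · have hσ := hσr r h1 h2
      have e1 : (∑ i ∈ Finset.Icc 1 k, x r i) + 1 ≤ C := by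
        have := hrplt r h1 h2; linarith
      have e2 : a * ((∑ i ∈ Finset.Icc 1 k, x r i) + 1) ≤ a * C := Nat.mul_le_mul_left a e1
      have e3 : a * C ≤ a * (MM / a) * C := by
        have h7 : a * 1 ≤ a * (MM/a) := Nat.mul_le_mul_left a ht
        calc a * C = (a*1) * C := by ring
          _ ≤ (a * (MM/a)) * C := Nat.mul_le_mul_right C h7
      have e4 : MM * C = a * (MM/a) * C + r * p * C := by
        conv_lhs => rw [← h3]
        ring
      have e5 : a * ((∑ i ∈ Finset.Icc 1 k, x r i) + 1)
          = a * (∑ i ∈ Finset.Icc 1 k, x r i) + a := by ring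
      simp only [hwdef]
      linarith [Nat.zero_le ((∑ i ∈ Finset.Icc 1 k, y i) * a)]
  -- multiples of q are never gaps
  have hP0 : ∀ n : ℕ, n % q = 0 →
      (∃ y : ℕ → ℕ, p * n = y 0 * a +
        ∑ i ∈ Finset.Icc 1 k, y i * (b ^ i * a + repunit b i * d)) := by
    intro n hn
    refine ⟨fun j => if j = 0 then n / q else 0, ?_⟩
    have hz : ∑ i ∈ Finset.Icc 1 k,
        (if i = 0 then n / q else 0) * (b ^ i * a + repunit b i * d) = 0 :=
      Finset.sum_eq_zero fun i hi => by
        rw [Finset.mem_Icc] at hi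
        rw [if_neg (by omega)]
        ring
    show p * n = (if (0:ℕ) = 0 then n / q else 0) * a +
      ∑ i ∈ Finset.Icc 1 k, (if i = 0 then n / q else 0) * (b ^ i * a + repunit b i * d)
    rw [hz, if_pos rfl]
    have hd2 : q * (n / q) = n := by
      have hdm := Nat.div_add_mod n q
      rw [hn] at hdm
      linarith
    calc p * n = p * (q * (n/q)) := by rw [hd2]
      _ = n / q * a + 0 := by rw [hq]; ring
  -- membership criterion for a gap class
  have hPiff : ∀ r, 1 ≤ r → r ≤ q - 1 → ∀ n : ℕ, n % q = n0 r →
      ((∃ y : ℕ → ℕ, p * n = y 0 * a +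
          ∑ i ∈ Finset.Icc 1 k, y i * (b ^ i * a + repunit b i * d))
        ↔ w r ≤ p * n) := by
    intro r h1 h2 n hn
    have hpn0 : p * n = p * n0 r + a * (n / q) := by
      have hdm := Nat.div_add_mod n q
      rw [hn] at hdm
      calc p * n = p * (q * (n/q) + n0 r) := by rw [hdm]
        _ = p * n0 r + (p*q) * (n/q) := by ring
        _ = p * n0 r + a * (n/q) := by rw [← hq]
    have hpnmod : p * n ≡ p * n0 r [MOD a] := by
      show p * n % a = (p * n0 r) % a
      rw [hpn0, mul_comm a (n/q), Nat.add_mul_mod_self_right]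
    constructor
    · rintro ⟨y, hy⟩
      have hyv : p * n = y 0 * a + ((∑ i ∈ Finset.Icc 1 k, repunit b i * y i) * C
          + (∑ i ∈ Finset.Icc 1 k, y i) * a) := by rw [hy, hSg y]
      have hym : p * n ≡ (∑ i ∈ Finset.Icc 1 k, repunit b i * y i) * C [MOD a] := by
        show p * n % a = _ % a
        have hyv2 : p * n = (∑ i ∈ Finset.Icc 1 k, repunit b i * y i) * C
            + (y 0 + ∑ i ∈ Finset.Icc 1 k, y i) * a := by rw [hyv]; ring
        rw [hyv2, Nat.add_mul_mod_self_right]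
      have hym2 : (∑ i ∈ Finset.Icc 1 k, repunit b i * y i) * C
          ≡ (∑ i ∈ Finset.Icc 1 k, repunit b i * y i) * d [MOD a] :=
        Nat.ModEq.mul_left _ hCd
      have hfin : d * (∑ i ∈ Finset.Icc 1 k, repunit b i * y i) ≡ d * (r * p) [MOD a] := by
        have t1 : (∑ i ∈ Finset.Icc 1 k, repunit b i * y i) * d ≡ p * (r*d) [MOD a] :=
          hym2.symm.trans (hym.symm.trans (hpnmod.trans (hpn0d r)))
        rw [mul_comm d (∑ i ∈ Finset.Icc 1 k, repunit b i * y i),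
          show d * (r * p) = p * (r * d) from by ring]
        exact t1
      have hlow := hlower r h1 h2 y hfin
      linarith [hyv, Nat.zero_le (y 0 * a)]
    · intro hwle
      have hmodeq : w r ≡ p * n [MOD a] := by
        have t1 : w r ≡ n0 r * p [MOD a] := (hwn0 r h1 h2).symm
        rw [mul_comm (n0 r) p] at t1
        exact t1.trans hpnmod.symm
      obtain ⟨s, hs⟩ := (Nat.modEq_iff_dvd' hwle).mp hmodeq
      have hps : p * n = a * s + w r := Nat.eq_add_of_sub_eq hwle hs
      refine ⟨fun j => if j = 0 then s else x r j, ?_⟩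
      have hsum2 : ∑ i ∈ Finset.Icc 1 k,
          (if i = 0 then s else x r i) * (b ^ i * a + repunit b i * d)
          = ∑ i ∈ Finset.Icc 1 k, x r i * (b ^ i * a + repunit b i * d) :=
        Finset.sum_congr rfl fun i hi => by
          rw [Finset.mem_Icc] at hi
          rw [if_neg (by omega)]
      have hsum3 : ∑ i ∈ Finset.Icc 1 k, x r i * (b ^ i * a + repunit b i * d)
          = (r*p) * C + (∑ i ∈ Finset.Icc 1 k, x r i) * a := by
        rw [hSg (x r), hx1 r h1 h2]
      show p * n = (if (0:ℕ) = 0 then s else x r 0) * a +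
        ∑ i ∈ Finset.Icc 1 k, (if i = 0 then s else x r i) * (b ^ i * a + repunit b i * d)
      rw [if_pos rfl, hsum2, hsum3]
      simp only [hwdef] at hps
      linarith
  -- description of the set of gaps as an explicit finite set
  have hseteq : {n : ℕ | 0 < n ∧ ¬ ∃ y : ℕ → ℕ, p * n = y 0 * a +
        ∑ i ∈ Finset.Icc 1 k, y i * (b ^ i * a + repunit b i * d)}
      = ↑((Finset.Icc 1 (q-1)).biUnion
          (fun r => (Finset.range (cc r)).image (fun m => n0 r + m * q))) := by
    ext n
    simp only [Set.mem_setOf_eq, Finset.coe_biUnion, Set.mem_iUnion, Finset.mem_coe,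
      Finset.mem_image, Finset.mem_range, Finset.mem_Icc]
    constructor
    · rintro ⟨hn, hnP⟩
      have hu0 : n % q ≠ 0 := fun h => hnP (hP0 n h)
      set r := n % q * e % q with hrdef
      have hrq : r < q := Nat.mod_lt _ (by omega)
      have hn0r : n0 r = n % q := by
        simp only [hn0def, hrdef]
        exact hcanc1 (n % q) (Nat.mod_lt _ (by omega))
      have hr1 : 1 ≤ r := by
        rcases Nat.eq_zero_or_pos r with h | h
        · exfalso
          rw [h] at hn0r
          simp only [hn0def] at hn0r
          simp at hn0r
          omega
        · exact h
      have hwgt : p * n < w r := by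
        by_contra hcon
        push_neg at hcon
        exact hnP ((hPiff r hr1 (by omega) n hn0r.symm).mpr hcon)
      have hdm := Nat.div_add_mod n q
      have hcm : (n/q)*q = q*(n/q) := mul_comm _ _
      have hneq : n0 r + (n/q) * q = n := by
        rw [hn0r]; linarith
      refine ⟨r, ⟨hr1, by omega⟩, n / q, ?_, hneq⟩
      have h5 : p * n = p * n0 r + a * (n/q) := by
        calc p * n = p * (n0 r + (n/q)*q) := by rw [hneq]
          _ = p * n0 r + (p*q)*(n/q) := by ring
          _ = p * n0 r + a * (n/q) := by rw [← hq]
      have h6 := hca r hr1 (by omega)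
      have h7 : a * (n/q) < a * cc r := by
        have hx' : p * n0 r = n0 r * p := mul_comm _ _
        have hy' : cc r * a = a * cc r := mul_comm _ _
        linarith
      exact Nat.lt_of_mul_lt_mul_left h7
    · rintro ⟨r, ⟨hr1, hr2⟩, m, hm, rfl⟩
      have hn0p := hn0pos r hr1 hr2
      constructor
      · exact Nat.lt_of_lt_of_le hn0p (Nat.le_add_right _ _)
      · intro hP
        have hmem : (n0 r + m * q) % q = n0 r := by
          rw [Nat.add_mul_mod_self_right, Nat.mod_eq_of_lt (hn0lt r)]
        have hwle := (hPiff r hr1 hr2 _ hmem).mp hP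
        have h5 : p * (n0 r + m*q) = p * n0 r + a * m := by
          calc p * (n0 r + m * q) = p * n0 r + (p*q)*m := by ring
            _ = p * n0 r + a * m := by rw [← hq]
        have h6 := hca r hr1 hr2
        have h7 : (m+1) * a ≤ cc r * a := Nat.mul_le_mul_right a (by omega)
        have h8 : p * n0 r = n0 r * p := mul_comm _ _
        have h9 : (m+1)*a = m*a + a := by ring
        have h10 : a * m = m * a := mul_comm _ _
        linarith
  -- cardinality
  have hcard : ((Finset.Icc 1 (q-1)).biUnion
      (fun r => (Finset.range (cc r)).image (fun m => n0 r + m * q))).card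
      = ∑ r ∈ Finset.Icc 1 (q-1), cc r := by
    rw [Finset.card_biUnion]
    · refine Finset.sum_congr rfl fun r hr => ?_
      rw [Finset.card_image_of_injective _ (fun m₁ m₂ hmm => by
        have h' : n0 r + m₁ * q = n0 r + m₂ * q := hmm
        have := Nat.add_left_cancel h'
        exact Nat.eq_of_mul_eq_mul_right (by omega) this), Finset.card_range]
    · intro r₁ h₁ r₂ h₂ hne
      rw [Function.onFun, Finset.disjoint_left]
      rintro nn hn₁ hn₂
      simp only [Finset.mem_image, Finset.mem_range] at hn₁ hn₂
      obtain ⟨m₁, hm₁, he₁⟩ := hn₁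
      obtain ⟨m₂, hm₂, he₂⟩ := hn₂
      rw [Finset.mem_coe, Finset.mem_Icc] at h₁ h₂
      have k₁ : nn % q = n0 r₁ := by
        rw [← he₁, Nat.add_mul_mod_self_right, Nat.mod_eq_of_lt (hn0lt r₁)]
      have k₂ : nn % q = n0 r₂ := by
        rw [← he₂, Nat.add_mul_mod_self_right, Nat.mod_eq_of_lt (hn0lt r₂)]
      have hre : r₁ = r₂ := by
        have c₁ := hcanc2 r₁ (by omega)
        have c₂ := hcanc2 r₂ (by omega)
        simp only [hn0def] at k₁ k₂
        calc r₁ = (r₁ * d % q) * e % q := c₁.symm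
          _ = (r₂ * d % q) * e % q := by rw [← k₁, k₂]
          _ = r₂ := c₂
      exact hne hre
  -- Gauss sum and permutation sum
  have hgauss' : ∑ i ∈ Finset.range q, i = ∑ r ∈ Finset.Icc 1 (q-1), r := by
    rw [Finset.range_eq_Ico, Finset.sum_eq_sum_Ico_succ_bot (by omega : 0 < q)]
    rw [show Finset.Ico (0+1) q = Finset.Icc 1 (q-1) from by
      rw [← Finset.Ico_add_one_right_eq_Icc]; congr 1; omega]
    simp
  have hgauss : (∑ r ∈ Finset.Icc 1 (q-1), r) * 2 = q * (q-1) := by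
    rw [← hgauss']; exact Finset.sum_range_id_mul_two q
  have hperm : ∑ r ∈ Finset.Icc 1 (q-1), n0 r = ∑ r ∈ Finset.Icc 1 (q-1), r := by
    refine Finset.sum_nbij' (fun r => r * d % q) (fun s => s * e % q) ?_ ?_ ?_ ?_ ?_
    · intro r hr
      rw [Finset.mem_Icc] at hr
      show r * d % q ∈ Finset.Icc 1 (q-1)
      rw [Finset.mem_Icc]
      refine ⟨?_, Nat.le_pred_of_lt (Nat.mod_lt _ (by omega))⟩
      have := hn0pos r hr.1 hr.2
      simpa [hn0def] using this
    · intro s hs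
      rw [Finset.mem_Icc] at hs
      show s * e % q ∈ Finset.Icc 1 (q-1)
      rw [Finset.mem_Icc]
      refine ⟨?_, Nat.le_pred_of_lt (Nat.mod_lt _ (by omega))⟩
      rcases Nat.eq_zero_or_pos (s*e % q) with h | h
      · exfalso
        have hc := hcanc1 s (by omega)
        rw [h] at hc
        simp at hc
        omega
      · exact h
    · intro r hr
      rw [Finset.mem_Icc] at hr
      show (r * d % q) * e % q = r
      exact hcanc2 r (by omega)
    · intro s hs
      rw [Finset.mem_Icc] at hs
      show (s * e % q) * d % q = s
      exact hcanc1 s (by omega)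
    · intro r hr
      simp [hn0def]
  -- the main counting identity over ℕ
  have hNatId : (∑ r ∈ Finset.Icc 1 (q-1), cc r) * a + (∑ r ∈ Finset.Icc 1 (q-1), r) * p
      = (∑ r ∈ Finset.Icc 1 (q-1), r) * (p * C)
        + a * (∑ r ∈ Finset.Icc 1 (q-1), (∑ i ∈ Finset.Icc 1 k, x r i)) := by
    have h1 : ∑ r ∈ Finset.Icc 1 (q-1), (cc r * a + n0 r * p)
        = ∑ r ∈ Finset.Icc 1 (q-1), w r :=
      Finset.sum_congr rfl fun r hr => by
        rw [Finset.mem_Icc] at hr; exact hca r hr.1 hr.2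
    have h2 : ∑ r ∈ Finset.Icc 1 (q-1), (cc r * a + n0 r * p)
        = (∑ r ∈ Finset.Icc 1 (q-1), cc r) * a + (∑ r ∈ Finset.Icc 1 (q-1), n0 r) * p := by
      rw [Finset.sum_add_distrib, ← Finset.sum_mul, ← Finset.sum_mul]
    have h3 : ∑ r ∈ Finset.Icc 1 (q-1), w r
        = (∑ r ∈ Finset.Icc 1 (q-1), r) * (p * C)
          + a * (∑ r ∈ Finset.Icc 1 (q-1), (∑ i ∈ Finset.Icc 1 k, x r i)) := by
      simp only [hwdef]
      have h3a : ∑ r ∈ Finset.Icc 1 (q-1), (r*p*C + a * (∑ i ∈ Finset.Icc 1 k, x r i))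
          = ∑ r ∈ Finset.Icc 1 (q-1), (r*(p*C) + a * (∑ i ∈ Finset.Icc 1 k, x r i)) :=
        Finset.sum_congr rfl fun r _ => by ring
      rw [h3a, Finset.sum_add_distrib, ← Finset.sum_mul, ← Finset.mul_sum]
    rw [hperm] at h2
    linarith
  -- now assemble everything, over ℤ
  rw [hqap, hseteq, Set.ncard_coe_finset, hcard]
  have hCZ : (C:ℤ) = ((b:ℤ) - 1) * a + d := by
    rw [hCdef]
    push_cast [Nat.cast_sub (show 1 ≤ b by omega)]
    ring
  have haz : (a:ℤ) ≠ 0 := Int.natCast_ne_zero.mpr (by omega)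
  apply mul_left_cancel₀ haz
  have hNatIdZ := congrArg (Nat.cast : ℕ → ℤ) hNatId
  push_cast at hNatIdZ
  have hgaussZ := congrArg (Nat.cast : ℕ → ℤ) hgauss
  push_cast [Nat.cast_sub (show 1 ≤ q from by omega)] at hgaussZ
  have hqZ : (a:ℤ) = (p:ℤ) * q := by exact_mod_cast hq
  push_cast
  linear_combination 2*hNatIdZ + ((p:ℤ)*(C:ℤ) - (p:ℤ))*hgaussZ
    - ((q:ℤ)-1)*((C:ℤ)-1)*hqZ + (a:ℤ)*((q:ℤ)-1)*hCZ
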